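/- arXiv:1607.00758 — 3 statements merged into one kernel-verified Lean document; each statement's English description precedes it below -/
import Mathlib

section
/- For the two-qubit operator C₂ = (H⊗H)·CZ, one has C₂³·(Z⊗I) = (I⊗Z)·C₂³ and C₂³·(X⊗I) = (I⊗X)·C₂³; that is, three applications of C₂ act as a mirror (swap) on Pauli operators of a 2-qubit state. -/
open Matrix Kronecker

noncomputable section

/-- Pauli X -/
def PX : Matrix (Fin 2) (Fin 2) ℂ := !![0, 1; 1, 0]
/-- Pauli Z -/
def PZ : Matrix (Fin 2) (Fin 2) ℂ := !![1, 0; 0, -1]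
/-- Hadamard -/
def Hg : Matrix (Fin 2) (Fin 2) ℂ := (((Real.sqrt 2 : ℝ) : ℂ))⁻¹ • !![1, 1; 1, -1]
/-- Controlled-Z: |0⟩⟨0|⊗I + |1⟩⟨1|⊗Z -/
def CZ : Matrix (Fin 2 × Fin 2) (Fin 2 × Fin 2) ℂ :=
  (Matrix.single 0 0 1) ⊗ₖ (1 : Matrix (Fin 2) (Fin 2) ℂ)
    + (Matrix.single 1 1 1) ⊗ₖ PZ
/-- CNOT: |0⟩⟨0|⊗I + |1⟩⟨1|⊗X -/
def CNOT : Matrix (Fin 2 × Fin 2) (Fin 2 × Fin 2) ℂ :=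
  (Matrix.single 0 0 1) ⊗ₖ (1 : Matrix (Fin 2) (Fin 2) ℂ)
    + (Matrix.single 1 1 1) ⊗ₖ PX
/-- R_Z(θ) = exp(-i(θ/2)Z) -/
def RZ (θ : ℝ) : Matrix (Fin 2) (Fin 2) ℂ :=
  NormedSpace.exp ((((-θ/2 : ℝ) : ℂ) * Complex.I) • PZ)
/-- R_X(θ) = exp(-i(θ/2)X) -/
def RX (θ : ℝ) : Matrix (Fin 2) (Fin 2) ℂ :=
  NormedSpace.exp ((((-θ/2 : ℝ) : ℂ) * Complex.I) • PX)
/-- R_{ZX}(α) = exp(-i(α/2) Z⊗X) -/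
def RZX (α : ℝ) : Matrix (Fin 2 × Fin 2) (Fin 2 × Fin 2) ℂ :=
  NormedSpace.exp ((((-α/2 : ℝ) : ℂ) * Complex.I) • (PZ ⊗ₖ PX))
/-- |+⟩ -/
def ketPlus : Fin 2 → ℂ := (((Real.sqrt 2 : ℝ) : ℂ))⁻¹ • (fun _ : Fin 2 => (1 : ℂ))
/-- |−⟩ -/
def ketMinus : Fin 2 → ℂ :=
  (((Real.sqrt 2 : ℝ) : ℂ))⁻¹ • (fun j : Fin 2 => if j = 0 then (1 : ℂ) else -1)
/-- Tensor product of single-qubit vectors -/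
def tens (u v : Fin 2 → ℂ) : Fin 2 × Fin 2 → ℂ := fun p => u p.1 * v p.2
/-- C₂ = (H⊗H)·CZ -/
def C2 : Matrix (Fin 2 × Fin 2) (Fin 2 × Fin 2) ℂ := (Hg ⊗ₖ Hg) * CZ

def Mf : Matrix (Fin 2 × Fin 2) (Fin 2 × Fin 2) ℂ :=
  fun p q => (if p.1 = 1 ∧ q.1 = 1 then -1 else 1) * (if p.2 = 1 ∧ q.2 = 1 then -1 else 1)
    * (if q.1 = 1 ∧ q.2 = 1 then -1 else 1)

def SW : Matrix (Fin 2 × Fin 2) (Fin 2 × Fin 2) ℂ :=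
  fun p q => if p.1 = q.2 ∧ p.2 = q.1 then 1 else 0

lemma hC2 : C2 = ((((Real.sqrt 2 : ℝ) : ℂ))⁻¹ ^ 2) • Mf := by
  ext ⟨i, j⟩ ⟨k, l⟩
  fin_cases i <;> fin_cases j <;> fin_cases k <;> fin_cases l <;>
    simp [C2, Hg, CZ, PZ, Mf, Matrix.mul_apply, Fintype.sum_prod_type, Fin.sum_univ_two,
      Matrix.single, Matrix.one_apply, sq]

lemma hM3 : Mf * Mf * Mf = (8 : ℂ) • SW := by
  ext ⟨i, j⟩ ⟨k, l⟩
  fin_cases i <;> fin_cases j <;> fin_cases k <;> fin_cases l <;>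
    simp [Mf, SW, Matrix.mul_apply, Fintype.sum_prod_type, Fin.sum_univ_two] <;> norm_num

lemma hSWZ : SW * (PZ ⊗ₖ (1 : Matrix (Fin 2) (Fin 2) ℂ))
    = ((1 : Matrix (Fin 2) (Fin 2) ℂ) ⊗ₖ PZ) * SW := by
  ext ⟨i, j⟩ ⟨k, l⟩
  fin_cases i <;> fin_cases j <;> fin_cases k <;> fin_cases l <;>
    simp [SW, PZ, Matrix.mul_apply, Fintype.sum_prod_type, Fin.sum_univ_two,
      Matrix.one_apply]

lemma hSWX : SW * (PX ⊗ₖ (1 : Matrix (Fin 2) (Fin 2) ℂ))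
    = ((1 : Matrix (Fin 2) (Fin 2) ℂ) ⊗ₖ PX) * SW := by
  ext ⟨i, j⟩ ⟨k, l⟩
  fin_cases i <;> fin_cases j <;> fin_cases k <;> fin_cases l <;>
    simp [SW, PX, Matrix.mul_apply, Fintype.sum_prod_type, Fin.sum_univ_two,
      Matrix.one_apply]

theorem c2_cubed_mirror :
    C2 ^ 3 * (PZ ⊗ₖ (1 : Matrix (Fin 2) (Fin 2) ℂ))
      = ((1 : Matrix (Fin 2) (Fin 2) ℂ) ⊗ₖ PZ) * C2 ^ 3 ∧
    C2 ^ 3 * (PX ⊗ₖ (1 : Matrix (Fin 2) (Fin 2) ℂ))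
      = ((1 : Matrix (Fin 2) (Fin 2) ℂ) ⊗ₖ PX) * C2 ^ 3 := by
  have hp : Mf ^ 3 = Mf * Mf * Mf := by rw [pow_succ, pow_two]
  have h3 : C2 ^ 3 = ((((Real.sqrt 2 : ℝ) : ℂ))⁻¹ ^ 6 * 8) • SW := by
    rw [hC2, smul_pow, hp, hM3, smul_smul, ← pow_mul]
  constructor <;> rw [h3, smul_mul_assoc, mul_smul_comm]
  · rw [hSWZ]
  · rw [hSWX]
end
end

section
/- For every n ≥ 1, the operator C_n = (⊗_{i=1}^n H_i)·(∏_{i=1}^{n−1} CZ_{i,i+1}) on n qubits satisfies the mirror relations C_n^{n+1}·Z_i·C_n^{−(n+1)} = Z_{n+1−i} and C_n^{n+1}·X_i·C_n^{−(n+1)} = X_{n+1−i} for all 1 ≤ i ≤ n, where Z_i (resp. X_i) denotes Pauli-Z (resp. X) acting on qubit i. -/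
open Matrix Kronecker

noncomputable section

/-- Single-qubit operator `A` acting on qubit `i` of `n` qubits (identity elsewhere). -/
def op {n : ℕ} (i : Fin n) (A : Matrix (Fin 2) (Fin 2) ℂ) :
    Matrix (Fin n → Fin 2) (Fin n → Fin 2) ℂ :=
  fun f g => ∏ j, if j = i then A (f j) (g j) else if f j = g j then 1 else 0

/-- ⊗_i H_i on n qubits. -/
def Hall (n : ℕ) : Matrix (Fin n → Fin 2) (Fin n → Fin 2) ℂ :=
  fun f g => ∏ j, Hg (f j) (g j)

/-- ∏_{i=1}^{n-1} CZ_{i,i+1} on n qubits (a diagonal matrix). -/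
def CZall (n : ℕ) : Matrix (Fin n → Fin 2) (Fin n → Fin 2) ℂ :=
  Matrix.diagonal fun f => ∏ j : Fin n,
    if h : (j : ℕ) + 1 < n then
      (if f j = 1 ∧ f ⟨(j : ℕ) + 1, h⟩ = 1 then (-1 : ℂ) else 1)
    else 1

/-- C_n = (⊗_i H_i)·(∏_i CZ_{i,i+1}) -/
def Cn (n : ℕ) : Matrix (Fin n → Fin 2) (Fin n → Fin 2) ℂ := Hall n * CZall n

open scoped Fin.CommRing Fin.NatCast





def chi : Fin 2 → ℂ := fun x => if x = 0 then 1 else -1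

lemma f2add : (1 + 1 : Fin 2) = 0 := rfl

lemma chi_add (x y : Fin 2) : chi (x + y) = chi x * chi y := by
  fin_cases x <;> fin_cases y <;> norm_num [chi, f2add]

lemma chi_inj {x y : Fin 2} (h : chi x = chi y) : x = y := by
  fin_cases x <;> fin_cases y <;> simp_all [chi] <;> norm_num at h

lemma chi_sq (x : Fin 2) : chi x * chi x = 1 := by
  fin_cases x <;> norm_num [chi]

lemma chi_zero : chi 0 = 1 := rfl

lemma chi_sum {α : Type*} [DecidableEq α] (s : Finset α) (f : α → Fin 2) :
    chi (∑ k ∈ s, f k) = ∏ k ∈ s, chi (f k) := by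
  induction s using Finset.induction with
  | empty => simp [chi]
  | insert a s h ih => rw [Finset.sum_insert h, Finset.prod_insert h, chi_add, ih]

def XZm (x z : Fin 2) : Matrix (Fin 2) (Fin 2) ℂ :=
  Matrix.of fun p q => (if p = x + q then 1 else 0) * chi (z * q)

lemma XZm_zero : XZm 0 0 = 1 := by
  ext p q
  fin_cases p <;> fin_cases q <;> simp [XZm, chi, Matrix.one_apply]

lemma XZm_X : XZm 1 0 = PX := by
  ext p q
  fin_cases p <;> fin_cases q <;> simp [XZm, chi, PX, f2add]

lemma XZm_Z : XZm 0 1 = PZ := by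
  ext p q
  fin_cases p <;> fin_cases q <;> norm_num [XZm, chi, PZ]

lemma sqc : (((Real.sqrt 2 : ℝ) : ℂ))⁻¹ * (((Real.sqrt 2 : ℝ) : ℂ))⁻¹ = 2⁻¹ := by
  rw [← mul_inv, ← Complex.ofReal_mul, Real.mul_self_sqrt (by norm_num)]
  norm_num

lemma Hg_mul_Hg : Hg * Hg = 1 := by
  rw [Hg, Matrix.smul_mul, Matrix.mul_smul, smul_smul, sqc]
  ext p q
  fin_cases p <;> fin_cases q <;>
    simp [Matrix.mul_apply, Fin.sum_univ_two, Matrix.one_apply] <;> norm_num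

lemma Hg_conj (x z : Fin 2) : Hg * XZm x z = chi (x * z) • (XZm z x * Hg) := by
  fin_cases x <;> fin_cases z <;>
    · ext p q
      fin_cases p <;> fin_cases q <;>
        (simp [Hg, XZm, chi, f2add, Matrix.mul_apply, Fin.sum_univ_two]; try ring)

noncomputable section


def Prd {n : ℕ} (M : Fin n → Matrix (Fin 2) (Fin 2) ℂ) :
    Matrix (Fin n → Fin 2) (Fin n → Fin 2) ℂ :=
  Matrix.of fun f g => ∏ j, M j (f j) (g j)

lemma Prd_mul {n : ℕ} (M N : Fin n → Matrix (Fin 2) (Fin 2) ℂ) :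
    Prd M * Prd N = Prd (fun j => M j * N j) := by
  ext f g
  rw [Matrix.mul_apply]
  show ∑ h : Fin n → Fin 2, (∏ j, M j (f j) (h j)) * ∏ j, N j (h j) (g j)
      = ∏ j, (M j * N j) (f j) (g j)
  simp_rw [← Finset.prod_mul_distrib, Matrix.mul_apply]
  rw [Finset.prod_univ_sum, ← Fintype.piFinset_univ]

lemma Prd_smul {n : ℕ} (c : Fin n → ℂ) (M : Fin n → Matrix (Fin 2) (Fin 2) ℂ) :
    Prd (fun j => c j • M j) = (∏ j, c j) • Prd M := by
  ext f g
  show (∏ j, (c j • M j) (f j) (g j)) = (∏ j, c j) * ∏ j, M j (f j) (g j)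
  rw [← Finset.prod_mul_distrib]
  rfl

lemma Prd_one {n : ℕ} : Prd (fun _ : Fin n => (1 : Matrix (Fin 2) (Fin 2) ℂ)) = 1 := by
  ext f g
  show (∏ j, (1 : Matrix (Fin 2) (Fin 2) ℂ) (f j) (g j)) = (1 : Matrix _ _ ℂ) f g
  by_cases h : f = g
  · subst h; simp [Matrix.one_apply]
  · rw [Matrix.one_apply_ne h]
    obtain ⟨j, hj⟩ := Function.ne_iff.mp h
    exact Finset.prod_eq_zero (Finset.mem_univ j) (Matrix.one_apply_ne hj)

noncomputable section

section F2
variable {n : ℕ}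

lemma f2_add_self (x : Fin 2) : x + x = 0 := by fin_cases x <;> rfl

def pad (a : Fin n → Fin 2) (k : ℤ) : Fin 2 :=
  if h : 0 ≤ k ∧ k < n then a ⟨k.toNat, by omega⟩ else 0

lemma pad_coe (a : Fin n → Fin 2) (j : Fin n) : pad a (j : ℤ) = a j := by
  rw [pad, dif_pos ⟨by omega, by exact_mod_cast j.isLt⟩]
  congr 1
  all_goals exact Fin.ext (by simp)

lemma pad_add (a g : Fin n → Fin 2) (k : ℤ) : pad (a + g) k = pad a k + pad g k := by
  rw [pad, pad, pad]
  split <;> simp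

lemma pad_neg (a : Fin n → Fin 2) : pad a (-1) = 0 := by
  rw [pad, dif_neg]; omega

lemma pad_n (a : Fin n → Fin 2) : pad a n = 0 := by
  rw [pad, dif_neg]; omega

lemma pad_zero_fn (k : ℤ) : pad (0 : Fin n → Fin 2) k = 0 := by
  rw [pad]; split <;> rfl

def qf (a : Fin n → Fin 2) : Fin 2 := ∑ k ∈ Finset.range n, pad a k * pad a (k + 1)

def dotf (a b : Fin n → Fin 2) : Fin 2 := ∑ j : Fin n, a j * b j

def nbr (a : Fin n → Fin 2) : Fin n → Fin 2 :=
  fun j => pad a ((j : ℤ) - 1) + pad a ((j : ℤ) + 1)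

lemma nbr_zero : nbr (0 : Fin n → Fin 2) = 0 := by
  funext j; rw [nbr, pad_zero_fn, pad_zero_fn, add_zero]; rfl

lemma sum_shift_eq (F : ℕ → Fin 2) (m : ℕ) (h0 : F 0 = 0) (hm : F m = 0) :
    (∑ k ∈ Finset.range m, F (k + 1)) = ∑ k ∈ Finset.range m, F k := by
  have h := (Finset.sum_range_succ' F m).symm.trans (Finset.sum_range_succ F m)
  rw [h0, hm, add_zero, add_zero] at h
  exact h

lemma shifted_sum (a g : Fin n → Fin 2) :
    (∑ k ∈ Finset.range n, pad a ((k : ℤ) - 1) * pad g (k : ℤ))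
      = ∑ k ∈ Finset.range n, pad a (k : ℤ) * pad g ((k : ℤ) + 1) := by
  have hs := sum_shift_eq (fun m : ℕ => pad a ((m : ℤ) - 1) * pad g (m : ℤ)) n
    (by simp only [Nat.cast_zero, zero_sub, pad_neg, zero_mul])
    (by show pad a ((n:ℤ) - 1) * pad g (n:ℤ) = 0; rw [pad_n, mul_zero])
  rw [← hs]
  apply Finset.sum_congr rfl
  intro k _
  push_cast
  rw [add_sub_cancel_right]

lemma dot_nbr_left (a g : Fin n → Fin 2) :
    dotf (nbr a) g = (∑ k ∈ Finset.range n, pad a (k : ℤ) * pad g ((k : ℤ) + 1))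
      + ∑ k ∈ Finset.range n, pad a ((k : ℤ) + 1) * pad g (k : ℤ) := by
  rw [dotf]
  rw [show (∑ j : Fin n, nbr a j * g j)
      = ∑ k ∈ Finset.range n, (pad a ((k : ℤ) - 1) + pad a ((k : ℤ) + 1)) * pad g (k : ℤ) by
    rw [← Fin.sum_univ_eq_sum_range fun k => (pad a ((k : ℤ) - 1) + pad a ((k : ℤ) + 1)) * pad g (k : ℤ)]
    exact Finset.sum_congr rfl fun j _ => by rw [pad_coe]; rfl]
  simp_rw [add_mul]
  rw [Finset.sum_add_distrib, shifted_sum]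

lemma qf_add (a g : Fin n → Fin 2) :
    qf (a + g) = qf a + qf g + dotf (nbr a) g := by
  rw [dot_nbr_left, qf, qf, qf]
  simp_rw [pad_add]
  rw [show ∀ S1 S2 T1 T2 : Fin 2, S1 + S2 + (T1 + T2) = ((S1 + S2) + T1) + T2 by intros; ring]
  rw [← Finset.sum_add_distrib, ← Finset.sum_add_distrib, ← Finset.sum_add_distrib]
  apply Finset.sum_congr rfl
  intro k _
  push_cast
  ring

lemma dotf_nbr_self (a : Fin n → Fin 2) : dotf a (nbr a) = 0 := by
  have h : dotf a (nbr a) = dotf (nbr a) a := by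
    rw [dotf, dotf]; exact Finset.sum_congr rfl fun j _ => mul_comm _ _
  rw [h, dot_nbr_left]
  have h2 : (∑ k ∈ Finset.range n, pad a ((k : ℤ) + 1) * pad a (k : ℤ))
      = ∑ k ∈ Finset.range n, pad a (k : ℤ) * pad a ((k : ℤ) + 1) :=
    Finset.sum_congr rfl fun k _ => mul_comm _ _
  rw [h2, f2_add_self]

end F2



section Main
variable {n : ℕ}




def PW (a b : Fin n → Fin 2) : Matrix (Fin n → Fin 2) (Fin n → Fin 2) ℂ :=
  Prd fun j => XZm (a j) (b j)

lemma Hall_eq : Hall n = Prd fun _ => Hg := rfl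

lemma chi_mul_ite (x y : Fin 2) :
    chi (x * y) = if x = 1 ∧ y = 1 then (-1 : ℂ) else 1 := by
  fin_cases x <;> fin_cases y <;> norm_num [chi]

lemma CZall_eq : CZall n = Matrix.diagonal fun f => chi (qf f) := by
  rw [CZall]
  apply congrArg Matrix.diagonal
  funext f
  unfold qf
  rw [chi_sum, ← Fin.prod_univ_eq_prod_range
    (fun k => chi (pad f (k : ℤ) * pad f ((k : ℤ) + 1)))]
  apply Finset.prod_congr rfl
  intro j _
  by_cases h : (j : ℕ) + 1 < n
  · rw [dif_pos h, chi_mul_ite, pad_coe]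
    have : pad f ((j : ℤ) + 1) = f ⟨(j : ℕ) + 1, h⟩ := by
      rw [pad, dif_pos ⟨by omega, by exact_mod_cast h⟩]
      exact congrArg f (Fin.ext (by simp))
    rw [this]
  · rw [dif_neg h]
    have : pad f ((j : ℤ) + 1) = 0 := by
      rw [pad, dif_neg]
      have := j.isLt
      omega
    rw [this, mul_zero, chi_zero]

lemma op_eq (i : Fin n) (A : Matrix (Fin 2) (Fin 2) ℂ) :
    op i A = Prd (fun j => if j = i then A else 1) := by
  funext f g
  show (∏ j : Fin n, if j = i then A (f j) (g j) else if f j = g j then (1:ℂ) else 0)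
      = ∏ j : Fin n, (if j = i then A else 1) (f j) (g j)
  apply Finset.prod_congr rfl
  intro j _
  by_cases h : j = i
  · simp [h]
  · simp [h, Matrix.one_apply]

lemma op_PZ (i : Fin n) :
    op i PZ = PW 0 (fun j => if j = i then 1 else 0) := by
  rw [op_eq, PW]
  apply congrArg
  funext j
  by_cases h : j = i
  · simp [h, XZm_Z]
  · simp [h, XZm_zero]

lemma op_PX (i : Fin n) :
    op i PX = PW (fun j => if j = i then 1 else 0) 0 := by
  rw [op_eq, PW]
  apply congrArg
  funext j
  by_cases h : j = i
  · simp [h, XZm_X]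
  · simp [h, XZm_zero]

lemma PW_apply_ne (a b f g : Fin n → Fin 2) (h : f ≠ a + g) :
    PW a b f g = 0 := by
  obtain ⟨j, hj⟩ := Function.ne_iff.mp h
  refine Finset.prod_eq_zero (Finset.mem_univ j) ?_
  show (if f j = a j + g j then (1:ℂ) else 0) * chi (b j * g j) = 0
  rw [if_neg (by simpa using hj), zero_mul]

lemma PW_apply_eq (a b g : Fin n → Fin 2) :
    PW a b (a + g) g = chi (dotf b g) := by
  show (∏ j, (if (a + g) j = a j + g j then (1:ℂ) else 0) * chi (b j * g j)) = _
  rw [dotf, chi_sum]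
  apply Finset.prod_congr rfl
  intro j _
  rw [if_pos (show (a + g) j = a j + g j from rfl), one_mul]

lemma Hall_conj (a b : Fin n → Fin 2) :
    Hall n * PW a b = chi (dotf a b) • (PW b a * Hall n) := by
  rw [Hall_eq, PW, Prd_mul]
  have : (fun j => Hg * XZm (a j) (b j))
      = fun j => chi (a j * b j) • (XZm (b j) (a j) * Hg) := by
    funext j; exact Hg_conj (a j) (b j)
  rw [this, Prd_smul, PW, Prd_mul]
  congr 1
  rw [dotf, chi_sum]

lemma CZall_conj (a b : Fin n → Fin 2) :
    CZall n * PW a b = chi (qf a) • (PW a (b + nbr a) * CZall n) := by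
  rw [CZall_eq]
  ext f g
  rw [Matrix.smul_apply, Matrix.diagonal_mul, Matrix.mul_diagonal]
  by_cases hf : f = a + g
  · subst hf
    rw [PW_apply_eq]
    have h2 : PW a (b + nbr a) (a + g) g = chi (dotf (b + nbr a) g) := PW_apply_eq _ _ _
    rw [h2]
    have hd : dotf (b + nbr a) g = dotf b g + dotf (nbr a) g := by
      rw [dotf, dotf, dotf, ← Finset.sum_add_distrib]
      exact Finset.sum_congr rfl fun j _ => by show (b j + nbr a j) * g j = _; ring
    rw [hd, qf_add, chi_add, chi_add, chi_add, smul_eq_mul]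
    ring
  · simp [PW_apply_ne _ _ _ _ hf]

lemma Cn_conj (a b : Fin n → Fin 2) (h1 : qf a = 0) (h2 : dotf a b = 0) :
    Cn n * PW a b = PW (b + nbr a) a * Cn n := by
  rw [Cn, mul_assoc, CZall_conj, h1, chi_zero, one_smul, ← mul_assoc, Hall_conj]
  have hd : dotf a (b + nbr a) = 0 := by
    have : dotf a (b + nbr a) = dotf a b + dotf a (nbr a) := by
      rw [dotf, dotf, dotf, ← Finset.sum_add_distrib]
      exact Finset.sum_congr rfl fun j _ => by show a j * (b j + nbr a j) = _; ring
    rw [this, h2, dotf_nbr_self, add_zero]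
  rw [hd, chi_zero, one_smul, mul_assoc]

lemma Hall_Hall : Hall n * Hall n = 1 := by
  rw [Hall_eq, Prd_mul]
  have : (fun _ : Fin n => Hg * Hg) = fun _ => (1 : Matrix (Fin 2) (Fin 2) ℂ) := by
    funext _; exact Hg_mul_Hg
  rw [this, Prd_one]

lemma CZall_CZall : CZall n * CZall n = 1 := by
  rw [CZall_eq, Matrix.diagonal_mul_diagonal]
  have : (fun f : Fin n → Fin 2 => chi (qf f) * chi (qf f)) = fun _ => (1:ℂ) := by
    funext f; exact chi_sq _
  rw [this, Matrix.diagonal_one]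

lemma Cn_right_inv : Cn n * (CZall n * Hall n) = 1 := by
  rw [Cn, mul_assoc, ← mul_assoc (CZall n), CZall_CZall, one_mul, Hall_Hall]

lemma Cn_left_inv : (CZall n * Hall n) * Cn n = 1 := by
  rw [Cn, mul_assoc, ← mul_assoc (Hall n) (Hall n), Hall_Hall, one_mul, CZall_CZall]

lemma Cn_pow_inv (m : ℕ) : (Cn n) ^ m * (CZall n * Hall n) ^ m = 1 := by
  induction m with
  | zero => simp
  | succ k ih =>
    rw [pow_succ, pow_succ', mul_assoc, ← mul_assoc (Cn n), Cn_right_inv, one_mul, ih]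

end Main


def wN (n iv t jv : ℕ) : ℕ :=
  (if (jv + iv + t) % 2 = 1 then 1 else 0) *
    ((if jv + 1 ≤ iv + t ∧ iv + 1 ≤ jv + t then 1 else 0)
     + (if jv + iv + 3 ≤ t then 1 else 0)
     + (if 2*n + 1 ≤ jv + iv + t then 1 else 0))

lemma wN_odd (n iv t jv : ℕ) (h : (jv + iv + t) % 2 = 1) :
    wN n iv t jv = (if jv + 1 ≤ iv + t ∧ iv + 1 ≤ jv + t then 1 else 0)
     + (if jv + iv + 3 ≤ t then 1 else 0)
     + (if 2*n + 1 ≤ jv + iv + t then 1 else 0) := by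
  rw [wN, if_pos h, one_mul]

lemma wN_even (n iv t jv : ℕ) (h : (jv + iv + t) % 2 = 0) : wN n iv t jv = 0 := by
  rw [wN, if_neg (by omega), zero_mul]

lemma ite_cases (c : Prop) [Decidable c] :
    (c ∧ (if c then (1:ℕ) else 0) = 1) ∨ (¬ c ∧ (if c then (1:ℕ) else 0) = 0) := by
  by_cases h : c <;> simp [h]


section
variable (n iv t jv : ℕ)

lemma wN_step (hi : iv < n) (hj : jv < n) (htn : t + 2 ≤ n + 1) :
    ((if 1 ≤ jv then wN n iv (t+1) (jv-1) else 0)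
     + (if jv+1 < n then wN n iv (t+1) (jv+1) else 0)
     + wN n iv t jv) % 2 = wN n iv (t+2) jv % 2 := by
  rcases Nat.mod_two_eq_zero_or_one (jv + iv + t) with hp | hp
  · -- even parity: every wN term vanishes
    rw [wN_even n iv t jv (by omega), wN_even n iv (t+2) jv (by omega)]
    by_cases h1 : 1 ≤ jv <;> by_cases h2 : jv + 1 < n
    · rw [if_pos h1, if_pos h2, wN_even n iv (t+1) (jv-1) (by omega),
        wN_even n iv (t+1) (jv+1) (by omega)]
    · rw [if_pos h1, if_neg h2, wN_even n iv (t+1) (jv-1) (by omega)]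
    · rw [if_neg h1, if_pos h2, wN_even n iv (t+1) (jv+1) (by omega)]
    · rw [if_neg h1, if_neg h2]
  · -- odd parity
    rw [wN_odd n iv t jv (by omega), wN_odd n iv (t+2) jv (by omega)]
    have C1 := ite_cases (jv + 1 ≤ iv + t ∧ iv + 1 ≤ jv + t)
    have C2 := ite_cases (jv + iv + 3 ≤ t)
    have C3 := ite_cases (2*n + 1 ≤ jv + iv + t)
    have D1 := ite_cases (jv + 1 ≤ iv + (t+2) ∧ iv + 1 ≤ jv + (t+2))
    have D2 := ite_cases (jv + iv + 3 ≤ t+2)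
    have D3 := ite_cases (2*n + 1 ≤ jv + iv + (t+2))
    by_cases h1 : 1 ≤ jv <;> by_cases h2 : jv + 1 < n
    · rw [if_pos h1, if_pos h2, wN_odd n iv (t+1) (jv-1) (by omega),
        wN_odd n iv (t+1) (jv+1) (by omega)]
      have A1 := ite_cases (jv - 1 + 1 ≤ iv + (t+1) ∧ iv + 1 ≤ jv - 1 + (t+1))
      have A2 := ite_cases (jv - 1 + iv + 3 ≤ t+1)
      have A3 := ite_cases (2*n + 1 ≤ jv - 1 + iv + (t+1))
      have B1 := ite_cases (jv + 1 + 1 ≤ iv + (t+1) ∧ iv + 1 ≤ jv + 1 + (t+1))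
      have B2 := ite_cases (jv + 1 + iv + 3 ≤ t+1)
      have B3 := ite_cases (2*n + 1 ≤ jv + 1 + iv + (t+1))
      omega
    · rw [if_pos h1, if_neg h2, wN_odd n iv (t+1) (jv-1) (by omega)]
      have A1 := ite_cases (jv - 1 + 1 ≤ iv + (t+1) ∧ iv + 1 ≤ jv - 1 + (t+1))
      have A2 := ite_cases (jv - 1 + iv + 3 ≤ t+1)
      have A3 := ite_cases (2*n + 1 ≤ jv - 1 + iv + (t+1))
      omega
    · rw [if_neg h1, if_pos h2, wN_odd n iv (t+1) (jv+1) (by omega)]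
      have B1 := ite_cases (jv + 1 + 1 ≤ iv + (t+1) ∧ iv + 1 ≤ jv + 1 + (t+1))
      have B2 := ite_cases (jv + 1 + iv + 3 ≤ t+1)
      have B3 := ite_cases (2*n + 1 ≤ jv + 1 + iv + (t+1))
      omega
    · rw [if_neg h1, if_neg h2]
      omega

end


section Traj
variable {n : ℕ} (i : Fin n)

def vseq (n : ℕ) (i : Fin n) : ℕ → (Fin n → Fin 2)
  | 0 => 0
  | 1 => fun j => if j = i then 1 else 0
  | (t+2) => nbr (vseq n i (t+1)) + vseq n i t

lemma f2_add_ne (x y : Fin 2) (h : x + y ≠ 0) : x ≠ 0 ∨ y ≠ 0 := by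
  revert h; fin_cases x <;> fin_cases y <;> decide

lemma f2_mul_ne (x y : Fin 2) (h : x * y ≠ 0) : x ≠ 0 ∧ y ≠ 0 := by
  revert h; fin_cases x <;> fin_cases y <;> decide

lemma pad_ne {a : Fin n → Fin 2} {z : ℤ} (h : pad a z ≠ 0) :
    ∃ j : Fin n, (j : ℤ) = z ∧ a j ≠ 0 := by
  rw [pad] at h
  split at h
  · next hz => exact ⟨⟨z.toNat, by omega⟩, by simp; omega, h⟩
  · exact absurd rfl h

lemma v_parity : ∀ t (j : Fin n), vseq n i t j ≠ 0 → (j.val + i.val + t) % 2 = 1 := by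
  intro t
  induction t using Nat.twoStepInduction with
  | zero => intro j h; exact absurd rfl h
  | one =>
    intro j h
    have h' : (if j = i then (1 : Fin 2) else 0) ≠ 0 := h
    by_cases hj : j = i
    · subst hj; omega
    · rw [if_neg hj] at h'; exact absurd rfl h'
  | more t ih1 ih2 =>
    intro j h
    rw [vseq] at h
    rcases f2_add_ne _ _ h with h' | h'
    · rcases f2_add_ne _ _ h' with h'' | h'' <;>
        · obtain ⟨j', hj', hne⟩ := pad_ne h''
          have := ih2 j' hne
          omega
    · have := ih1 j h'
      omega

lemma qf_v (t : ℕ) : qf (vseq n i t) = 0 := by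
  rw [qf]
  apply Finset.sum_eq_zero
  intro k _
  by_contra h
  obtain ⟨h1, h2⟩ := f2_mul_ne _ _ h
  obtain ⟨j1, hj1, hne1⟩ := pad_ne h1
  obtain ⟨j2, hj2, hne2⟩ := pad_ne h2
  have p1 := v_parity i t j1 hne1
  have p2 := v_parity i t j2 hne2
  omega

lemma dot_v (t : ℕ) : dotf (vseq n i (t+1)) (vseq n i t) = 0 := by
  rw [dotf]
  apply Finset.sum_eq_zero
  intro j _
  by_contra h
  obtain ⟨h1, h2⟩ := f2_mul_ne _ _ h
  have p1 := v_parity i (t+1) j h1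
  have p2 := v_parity i t j h2
  omega

lemma qf_zero : qf (0 : Fin n → Fin 2) = 0 := by
  rw [qf]
  apply Finset.sum_eq_zero
  intro k _
  rw [pad_zero_fn, zero_mul]

lemma dotf_zero (b : Fin n → Fin 2) : dotf 0 b = 0 := by
  rw [dotf]
  apply Finset.sum_eq_zero
  intro j _
  show (0 : Fin 2) * b j = 0
  rw [zero_mul]

lemma traj (s r : ℕ) :
    Cn n ^ s * PW (vseq n i (r+1)) (vseq n i r)
      = PW (vseq n i (s+r+1)) (vseq n i (s+r)) * Cn n ^ s := by
  induction s generalizing r with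
  | zero => simp
  | succ s ih =>
    have step : Cn n * PW (vseq n i (r+1)) (vseq n i r)
        = PW (vseq n i (r+2)) (vseq n i (r+1)) * Cn n := by
      have h := Cn_conj (vseq n i (r+1)) (vseq n i r) (qf_v i (r+1)) (dot_v i r)
      have hv : vseq n i r + nbr (vseq n i (r+1)) = vseq n i (r+2) := add_comm _ _
      rw [h, hv]
    rw [pow_succ, mul_assoc, step, ← mul_assoc, ih (r+1), mul_assoc, ← pow_succ,
      show s + (r+1) = s + 1 + r from by omega]

end Traj

section ClosedForm
variable {n : ℕ} (i : Fin n)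

def wseq (n : ℕ) (i : Fin n) (t : ℕ) : Fin n → Fin 2 := fun j => (wN n i.val t j.val : Fin 2)

lemma cast2 {a b : ℕ} (h : a % 2 = b % 2) : (a : Fin 2) = (b : Fin 2) :=
  Fin.ext (by rw [Fin.val_natCast, Fin.val_natCast, h])

lemma wN_zero_t (iv jv : ℕ) (hi : iv < n) (hj : jv < n) : wN n iv 0 jv = 0 := by
  unfold wN
  rw [if_neg (show ¬(jv + 1 ≤ iv + 0 ∧ iv + 1 ≤ jv + 0) by omega),
    if_neg (show ¬(jv + iv + 3 ≤ 0) by omega),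
    if_neg (show ¬(2*n + 1 ≤ jv + iv + 0) by omega)]
  simp

lemma wN_one_t (iv jv : ℕ) (hi : iv < n) (hj : jv < n) :
    wN n iv 1 jv = if jv = iv then 1 else 0 := by
  unfold wN
  split_ifs <;> omega

lemma veqw : ∀ t, t ≤ n + 1 → vseq n i t = wseq n i t := by
  intro t
  induction t using Nat.twoStepInduction with
  | zero =>
    intro _
    funext j
    rw [wseq]
    show (0 : Fin 2) = _
    rw [wN_zero_t i.val j.val i.isLt j.isLt, Nat.cast_zero]
  | one =>
    intro _
    funext j
    show (if j = i then (1 : Fin 2) else 0) = ((wN n i.val 1 j.val : ℕ) : Fin 2)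
    rw [wN_one_t i.val j.val i.isLt j.isLt]
    by_cases hj : j = i
    · rw [if_pos hj, if_pos (by rw [hj]), Nat.cast_one]
    · rw [if_neg hj, if_neg (fun hv => hj (Fin.ext hv)), Nat.cast_zero]
  | more t ih1 ih2 =>
    intro ht
    rw [vseq, ih1 (by omega), ih2 (by omega)]
    funext j
    show nbr (wseq n i (t+1)) j + wseq n i t j = wseq n i (t+2) j
    rw [nbr]
    have hpad : ∀ (T : ℕ) (z : ℤ), pad (wseq n i T) z
        = ((if 0 ≤ z ∧ z < n then wN n i.val T z.toNat else 0 : ℕ) : Fin 2) := by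
      intro T z
      rw [pad]
      split_ifs with h
      · rfl
      · rw [Nat.cast_zero]
    rw [hpad, hpad, wseq, wseq]
    have e1 : (if 0 ≤ (j:ℤ) - 1 ∧ (j:ℤ) - 1 < n then wN n i.val (t+1) ((j:ℤ) - 1).toNat else 0)
        = (if 1 ≤ j.val then wN n i.val (t+1) (j.val - 1) else 0) := by
      by_cases h : 1 ≤ j.val
      · rw [if_pos (by constructor <;> [omega; (have := j.isLt; omega)]), if_pos h]
        congr 1
        omega
      · rw [if_neg (by omega), if_neg h]
    have e2 : (if 0 ≤ (j:ℤ) + 1 ∧ (j:ℤ) + 1 < n then wN n i.val (t+1) ((j:ℤ) + 1).toNat else 0)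
        = (if j.val + 1 < n then wN n i.val (t+1) (j.val + 1) else 0) := by
      by_cases h : j.val + 1 < n
      · rw [if_pos (by constructor <;> omega), if_pos h]
        congr 1 <;> omega
      · rw [if_neg (by omega), if_neg h]
    rw [e1, e2, ← Nat.cast_add, ← Nat.cast_add]
    exact cast2 (wN_step n i.val t j.val i.isLt j.isLt ht)

lemma wN_n1 (iv jv : ℕ) (hi : iv < n) (hj : jv < n) : wN n iv (n+1) jv % 2 = 0 := by
  unfold wN
  split_ifs <;> omega

lemma wN_n (iv jv : ℕ) (hi : iv < n) (hj : jv < n) :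
    wN n iv n jv % 2 = (if jv + iv + 1 = n then 1 else 0) % 2 := by
  unfold wN
  split_ifs <;> omega

lemma v_n1 : vseq n i (n+1) = 0 := by
  rw [veqw i (n+1) le_rfl]
  funext j
  rw [wseq]
  show _ = (0 : Fin 2)
  rw [show (0 : Fin 2) = ((0 : ℕ) : Fin 2) from rfl]
  exact cast2 (by rw [wN_n1 i.val j.val i.isLt j.isLt])

lemma v_n : vseq n i n = fun j => if j = i.rev then 1 else 0 := by
  rw [veqw i n (by omega)]
  funext j
  rw [wseq]
  have hrev : (j = i.rev) ↔ (j.val + i.val + 1 = n) := by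
    rw [Fin.ext_iff, Fin.val_rev]
    omega
  by_cases hj : j = i.rev
  · rw [if_pos hj]
    rw [show (1 : Fin 2) = ((1 : ℕ) : Fin 2) from rfl]
    apply cast2
    rw [wN_n i.val j.val i.isLt j.isLt, if_pos (hrev.mp hj)]
  · rw [if_neg hj]
    rw [show (0 : Fin 2) = ((0 : ℕ) : Fin 2) from rfl]
    apply cast2
    rw [wN_n i.val j.val i.isLt j.isLt, if_neg (fun hv => hj (hrev.mpr hv))]

end ClosedForm

theorem cn_mirror (n : ℕ) (hn : 1 ≤ n) (i : Fin n) :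
    Cn n ^ (n + 1) * op i PZ * (Cn n ^ (n + 1))⁻¹ = op i.rev PZ ∧
    Cn n ^ (n + 1) * op i PX * (Cn n ^ (n + 1))⁻¹ = op i.rev PX := by
  have hinv : (Cn n ^ (n+1))⁻¹ = (CZall n * Hall n) ^ (n+1) :=
    Matrix.inv_eq_right_inv (Cn_pow_inv (n+1))
  have hsing : op i PZ = PW 0 (vseq n i 1) := op_PZ i
  have hsingX : op i PX = PW (vseq n i 1) 0 := op_PX i
  have hrevZ : op i.rev PZ = PW 0 (vseq n i n) := by rw [op_PZ i.rev, v_n i]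
  have hrevX : op i.rev PX = PW (vseq n i n) 0 := by rw [op_PX i.rev, v_n i]
  have hv2 : vseq n i (n+2) = vseq n i n := by
    rw [vseq, v_n1 i, nbr_zero, zero_add]
  have keyX : Cn n ^ (n+1) * op i PX = op i.rev PX * Cn n ^ (n+1) := by
    rw [hsingX, hrevX]
    have := traj i (n+1) 0
    rw [add_zero] at this
    rw [show vseq n i 0 = 0 from rfl] at this
    rw [this, show n+1+1 = n+2 from rfl, hv2, v_n1 i]
  have keyZ : Cn n ^ (n+1) * op i PZ = op i.rev PZ * Cn n ^ (n+1) := by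
    rw [hsing, hrevZ]
    have step1 : Cn n * PW 0 (vseq n i 1) = PW (vseq n i 1) 0 * Cn n := by
      have h := Cn_conj 0 (vseq n i 1) qf_zero (dotf_zero _)
      rw [h, nbr_zero, add_zero]
    have h2 := traj i n 0
    rw [add_zero] at h2
    rw [show vseq n i 0 = 0 from rfl] at h2
    calc Cn n ^ (n+1) * PW 0 (vseq n i 1)
        = Cn n ^ n * (Cn n * PW 0 (vseq n i 1)) := by rw [pow_succ, mul_assoc]
      _ = Cn n ^ n * (PW (vseq n i 1) 0 * Cn n) := by rw [step1]
      _ = (Cn n ^ n * PW (vseq n i 1) 0) * Cn n := by rw [mul_assoc]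
      _ = (PW (vseq n i (n+1)) (vseq n i n) * Cn n ^ n) * Cn n := by rw [h2]
      _ = PW 0 (vseq n i n) * Cn n ^ (n+1) := by rw [v_n1 i, mul_assoc, ← pow_succ]
  constructor
  · rw [hinv, keyZ, mul_assoc, Cn_pow_inv, mul_one]
  · rw [hinv, keyX, mul_assoc, Cn_pow_inv, mul_one]
end
end
end
end

section
/- For any single-qubit state |ψ⟩ and any angle θ, measuring the first qubit of CZ(|ψ⟩⊗|+⟩) in the basis {|+_θ⟩, |−_θ⟩} with outcome m leaves the second qubit in the state X^m·H·R_Z(θ)|ψ⟩ up to normalization and global phase: (⟨m|·H·R_Z(θ) ⊗ I)·CZ·(|ψ⟩⊗|+⟩) = (1/√2)·X^m·H·R_Z(θ)|ψ⟩. -/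
open Matrix Kronecker

noncomputable section

lemma RZ_eq (θ : ℝ) : RZ θ =
    !![Complex.exp (((-θ/2 : ℝ) : ℂ) * Complex.I), 0;
       0, Complex.exp (((θ/2 : ℝ) : ℂ) * Complex.I)] := by
  have hPZ : PZ = Matrix.diagonal ![1, -1] := by
    ext i j; fin_cases i <;> fin_cases j <;> simp [PZ, Matrix.diagonal]
  have : ((((-θ/2 : ℝ) : ℂ) * Complex.I) • PZ)
      = Matrix.diagonal ![(((-θ/2 : ℝ) : ℂ) * Complex.I), (((θ/2 : ℝ) : ℂ) * Complex.I)] := by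
    rw [hPZ, ← Matrix.diagonal_smul]
    funext i; fin_cases i <;> simp <;> ring_nf
  rw [RZ, this, Matrix.exp_diagonal]
  ext i j
  fin_cases i <;> fin_cases j <;>
    simp [Matrix.diagonal, NormedSpace.exp_eq_tsum, Complex.exp_eq_exp_ℂ]

set_option maxHeartbeats 2000000 in
theorem generalized_one_bit_teleportation (ψ : Fin 2 → ℂ) (θ : ℝ) (m : Fin 2) :
    (fun j => (((Hg * RZ θ) ⊗ₖ (1 : Matrix (Fin 2) (Fin 2) ℂ)) * CZ).mulVec
        (tens ψ ketPlus) (m, j))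
      = (((Real.sqrt 2 : ℝ) : ℂ))⁻¹ • (PX ^ (m : ℕ) * Hg * RZ θ).mulVec ψ := by
  funext j
  fin_cases m <;> fin_cases j <;>
  · simp only [RZ_eq, Hg, PX, PZ, CZ, ketPlus, tens, Matrix.mulVec, Matrix.mul_apply,
      dotProduct, Fintype.sum_prod_type, Fin.sum_univ_two,
      Matrix.kroneckerMap_apply, Matrix.add_apply, Matrix.smul_apply,
      Matrix.one_apply, Matrix.single, Matrix.of_apply, Matrix.cons_val',
      Matrix.cons_val_zero, Matrix.cons_val_one, Matrix.head_cons, Matrix.head_fin_const,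
      Matrix.empty_val', Matrix.cons_val_fin_one, pow_zero, pow_one,
      Pi.smul_apply, smul_eq_mul]
    norm_num [Fin.ext_iff]
    try field_simp
    try ring
end
end
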